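/- Let B ⊂ ℝ² be a convex lattice polygon with minimal lattice width ω(B) = 2k for a nonnegative integer k. Then area(B) ≥ (3/2) k². -/

import Mathlib

open Finset Set MeasureTheory Pointwise

/-- Embedding of lattice points into the real plane. -/
def toR (p : ℤ × ℤ) : ℝ × ℝ := ((p.1 : ℝ), (p.2 : ℝ))

/-- Integer pairing `u ⋅ p`. -/
def zdot (u p : ℤ × ℤ) : ℤ := u.1 * p.1 + u.2 * p.2

/-- The lattice width of the lattice polygon with vertex set `S` in the direction `u`. -/
def widthZ (u : ℤ × ℤ) (S : Finset (ℤ × ℤ)) (h : S.Nonempty) : ℤ :=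
  S.sup' h (zdot u) - S.inf' h (zdot u)

/-- The Euclidean area of the convex hull of the lattice points `S`. -/
noncomputable def areaOf (S : Finset (ℤ × ℤ)) : ℝ :=
  (volume (convexHull ℝ (toR '' (S : Set (ℤ × ℤ))))).toReal


noncomputable def stdTri : Set (ℝ × ℝ) := regionBetween (fun _ => 0) (fun x => 1 - x) (Set.Ioo 0 1)

lemma integ_on : IntegrableOn (fun x : ℝ => 1 - x) (Set.Ioo 0 1) volume := by
  apply IntegrableOn.mono_set (t := Set.Ioc (0:ℝ) 1) _ Set.Ioo_subset_Ioc_self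
  rw [← intervalIntegrable_iff_integrableOn_Ioc_of_le (by norm_num)]
  exact (intervalIntegrable_const).sub intervalIntegral.intervalIntegrable_id

lemma stdTri_vol : volume stdTri = ENNReal.ofReal (1/2) := by
  rw [stdTri, Measure.volume_eq_prod, volume_regionBetween_eq_integral]
  · congr 1
    simp only [Pi.sub_apply, sub_zero]
    calc ∫ y in Set.Ioo (0:ℝ) 1, (1 - y)
        = ∫ y in Set.Ioc (0:ℝ) 1, (1 - y) := by
          rw [MeasureTheory.integral_Ioc_eq_integral_Ioo]
      _ = 1/2 := by
          rw [← intervalIntegral.integral_of_le (by norm_num : (0:ℝ) ≤ 1),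
            intervalIntegral.integral_sub intervalIntegrable_const
              intervalIntegral.intervalIntegrable_id]
          simp [integral_id]
          norm_num
  · exact integrableOn_const (by simp [Real.volume_Ioo])
  · exact integ_on
  · exact measurableSet_Ioo
  · intro x hx
    simp only [Set.mem_Ioo] at hx
    show (0:ℝ) ≤ 1 - x
    linarith [hx.2]

lemma stdTri_subset :
    stdTri ⊆ convexHull ℝ ({((0:ℝ),(0:ℝ)), ((1:ℝ),(0:ℝ)), ((0:ℝ),(1:ℝ))} : Set (ℝ×ℝ)) := by
  rintro ⟨x, y⟩ hp
  obtain ⟨hx, hy⟩ := hp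
  simp only [Set.mem_Ioo] at hx hy
  have hx1 : (0:ℝ) < 1 - x := by linarith [hx.2]
  have h0 : ((0:ℝ),(0:ℝ)) ∈ convexHull ℝ ({((0:ℝ),(0:ℝ)), ((1:ℝ),(0:ℝ)), ((0:ℝ),(1:ℝ))} : Set (ℝ×ℝ)) :=
    subset_convexHull _ _ (by simp)
  have h1 : ((1:ℝ),(0:ℝ)) ∈ convexHull ℝ ({((0:ℝ),(0:ℝ)), ((1:ℝ),(0:ℝ)), ((0:ℝ),(1:ℝ))} : Set (ℝ×ℝ)) :=
    subset_convexHull _ _ (by simp)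
  have h2 : ((0:ℝ),(1:ℝ)) ∈ convexHull ℝ ({((0:ℝ),(0:ℝ)), ((1:ℝ),(0:ℝ)), ((0:ℝ),(1:ℝ))} : Set (ℝ×ℝ)) :=
    subset_convexHull _ _ (by simp)
  have hm : ((0:ℝ), y/(1-x)) ∈ convexHull ℝ ({((0:ℝ),(0:ℝ)), ((1:ℝ),(0:ℝ)), ((0:ℝ),(1:ℝ))} : Set (ℝ×ℝ)) := by
    apply (convex_convexHull ℝ _).segment_subset h0 h2
    refine ⟨1 - y/(1-x), y/(1-x), ?_, ?_, by ring, ?_⟩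
    · have : y/(1-x) ≤ 1 := by
        rw [div_le_one hx1]; linarith [hy.2]
      linarith
    · exact le_of_lt (div_pos hy.1 hx1)
    · simp [Prod.ext_iff]
  have := (convex_convexHull ℝ ({((0:ℝ),(0:ℝ)), ((1:ℝ),(0:ℝ)), ((0:ℝ),(1:ℝ))} : Set (ℝ×ℝ))).segment_subset hm h1
  apply this
  refine ⟨1 - x, x, by linarith [hx.2], le_of_lt hx.1, by ring, ?_⟩
  have : (1-x) * (y / (1-x)) = y := by field_simp
  simp [Prod.ext_iff, this]

example : (volume : Measure (ℝ×ℝ)).IsAddHaarMeasure := by infer_instance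
example : BorelSpace (ℝ×ℝ) := by infer_instance

lemma triangle_vol (x y z : ℝ×ℝ) :
    ENNReal.ofReal (|(y.1-x.1)*(z.2-x.2) - (y.2-x.2)*(z.1-x.1)| / 2)
      ≤ volume (convexHull ℝ ({x, y, z} : Set (ℝ×ℝ))) := by
  set a := y.1-x.1 with ha
  set b := z.1-x.1 with hb
  set c := y.2-x.2 with hc
  set d := z.2-x.2 with hd
  set L := Matrix.toLin (Module.Basis.finTwoProd ℝ) (Module.Basis.finTwoProd ℝ) !![a, b; c, d] with hL
  have hdet : LinearMap.det L = a*d - b*c := by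
    rw [hL, LinearMap.det_toLin, Matrix.det_fin_two_of]
  have himg : L '' (convexHull ℝ ({((0:ℝ),(0:ℝ)), ((1:ℝ),(0:ℝ)), ((0:ℝ),(1:ℝ))} : Set (ℝ×ℝ)))
      = convexHull ℝ ({(0,0), y - x, z - x} : Set (ℝ×ℝ)) := by
    rw [L.image_convexHull]
    congr 1
    rw [Set.image_insert_eq, Set.image_insert_eq, Set.image_singleton]
    have e0 : L ((0:ℝ),(0:ℝ)) = ((0:ℝ),(0:ℝ)) := L.map_zero
    have e1 : L ((1:ℝ),(0:ℝ)) = y - x := by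
      rw [hL, Matrix.toLin_finTwoProd_apply]
      simp [ha, hc, Prod.ext_iff]
    have e2 : L ((0:ℝ),(1:ℝ)) = z - x := by
      rw [hL, Matrix.toLin_finTwoProd_apply]
      simp [hb, hd, Prod.ext_iff]
    rw [e0, e1, e2]
  have htrans : convexHull ℝ ({(0,0), y - x, z - x} : Set (ℝ×ℝ))
      = (-x) +ᵥ convexHull ℝ ({x, y, z} : Set (ℝ×ℝ)) := by
    rw [← convexHull_vadd]
    congr 1
    rw [Set.vadd_set_insert, Set.vadd_set_insert, Set.vadd_set_singleton]
    simp only [vadd_eq_add]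
    have e1 : -x + y = y - x := by abel
    have e2 : -x + z = z - x := by abel
    rw [e1, e2]
    norm_num [Prod.ext_iff]
    rfl
  have hvol : volume (convexHull ℝ ({(0,0), y - x, z - x} : Set (ℝ×ℝ)))
      = volume (convexHull ℝ ({x, y, z} : Set (ℝ×ℝ))) := by
    rw [htrans]
    exact measure_vadd _ _ _
  calc ENNReal.ofReal (|a*d - c*b| / 2)
      = ENNReal.ofReal |a*d - b*c| * ENNReal.ofReal (1/2) := by
        rw [← ENNReal.ofReal_mul (abs_nonneg _)]
        ring_nf
    _ ≤ ENNReal.ofReal |a*d - b*c| * volume stdTri := by rw [stdTri_vol]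
    _ ≤ ENNReal.ofReal |a*d - b*c| *
        volume (convexHull ℝ ({((0:ℝ),(0:ℝ)), ((1:ℝ),(0:ℝ)), ((0:ℝ),(1:ℝ))} : Set (ℝ×ℝ))) := by
        exact mul_le_mul_right (measure_mono stdTri_subset) _
    _ = volume (L '' (convexHull ℝ ({((0:ℝ),(0:ℝ)), ((1:ℝ),(0:ℝ)), ((0:ℝ),(1:ℝ))} : Set (ℝ×ℝ)))) := by
        rw [Measure.addHaar_image_linearMap, hdet]
    _ = volume (convexHull ℝ ({x, y, z} : Set (ℝ×ℝ))) := by rw [himg, hvol]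

lemma abs_sub_le_of_same_sign (c₁ c₂ : ℝ) (h : 0 ≤ c₁ * c₂) :
    |c₂ - c₁| ≤ |c₁| ∨ |c₂ - c₁| ≤ |c₂| := by
  rcases le_total 0 c₁ with h1 | h1 <;> rcases le_total 0 c₂ with h2 | h2
  · rcases le_total c₁ c₂ with h3 | h3
    · right; rw [abs_of_nonneg (by linarith), abs_of_nonneg h2]; linarith
    · left; rw [abs_of_nonpos (by linarith), abs_of_nonneg h1]; linarith
  · have h0 : c₁ = 0 ∨ c₂ = 0 := by
      rcases mul_eq_zero.1 (le_antisymm (by nlinarith) h) with h' | h'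
      exacts [Or.inl h', Or.inr h']
    rcases h0 with h' | h' <;> subst h'
    · right; simp
    · left; simp
  · have h0 : c₁ = 0 ∨ c₂ = 0 := by
      rcases mul_eq_zero.1 (le_antisymm (by nlinarith) h) with h' | h'
      exacts [Or.inl h', Or.inr h']
    rcases h0 with h' | h' <;> subst h'
    · right; simp
    · left; simp
  · rcases le_total c₁ c₂ with h3 | h3
    · left; rw [abs_of_nonneg (by linarith), abs_of_nonpos h1]; linarith
    · right; rw [abs_of_nonpos (by linarith), abs_of_nonpos h2]; linarith

lemma line_null (A B C : ℝ) (hAB : ¬(A = 0 ∧ B = 0)) :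
    volume {z : ℝ × ℝ | A * z.2 - B * z.1 = C} = 0 := by
  have hf : IsLinearMap ℝ (fun z : ℝ × ℝ => A * z.2 - B * z.1) := by
    constructor
    · intro u v; simp; ring
    · intro a u; simp; ring
  rcases Set.eq_empty_or_nonempty {z : ℝ × ℝ | A * z.2 - B * z.1 = C} with he | ⟨z₀, hz₀⟩
  · rw [he]; exact measure_empty
  · have hker : LinearMap.ker (hf.mk' _) ≠ ⊤ := by
      intro htop
      have h1 : (hf.mk' _) (-B, A) = 0 := by
        rw [← LinearMap.mem_ker, htop]; trivial
      rw [IsLinearMap.mk'_apply] at h1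
      simp only at h1
      apply hAB
      constructor <;> nlinarith [sq_nonneg A, sq_nonneg B]
    have hset : {z : ℝ × ℝ | A * z.2 - B * z.1 = C}
        = z₀ +ᵥ (LinearMap.ker (hf.mk' _) : Set (ℝ × ℝ)) := by
      ext z
      rw [Set.mem_vadd_set_iff_neg_vadd_mem]
      simp only [Set.mem_setOf_eq, SetLike.mem_coe, LinearMap.mem_ker, vadd_eq_add,
        IsLinearMap.mk'_apply, Prod.snd_add, Prod.fst_add, Prod.snd_neg, Prod.fst_neg]
      simp only [Set.mem_setOf_eq] at hz₀
      constructor <;> intro h <;> linarith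
    rw [hset, measure_vadd]
    exact Measure.addHaar_submodule _ _ hker

lemma measurable_hull_finite {W : Set (ℝ × ℝ)} (hW : W.Finite) :
    MeasurableSet (convexHull ℝ W) :=
  ((hW.isCompact_convexHull ℝ).isClosed).measurableSet

lemma hull_ge_cross (V : Set (ℝ × ℝ)) (p q r s : ℝ × ℝ)
    (hp : p ∈ V) (hq : q ∈ V) (hr : r ∈ V) (hs : s ∈ V) :
    ENNReal.ofReal (|(q.1 - p.1) * (s.2 - r.2) - (q.2 - p.2) * (s.1 - r.1)| / 2)
      ≤ volume (convexHull ℝ V) := by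
  have hc₁ : ((s.1 - r.1) * (p.2 - r.2) - (s.2 - r.2) * (p.1 - r.1) : ℝ)
      = (s.1 - r.1) * (p.2 - r.2) - (s.2 - r.2) * (p.1 - r.1) := rfl
  set c₁ : ℝ := (s.1 - r.1) * (p.2 - r.2) - (s.2 - r.2) * (p.1 - r.1) with hc₁'
  set c₂ : ℝ := (s.1 - r.1) * (q.2 - r.2) - (s.2 - r.2) * (q.1 - r.1) with hc₂'
  have hkey : |(q.1 - p.1) * (s.2 - r.2) - (q.2 - p.2) * (s.1 - r.1)| = |c₂ - c₁| := by
    rw [show c₂ - c₁ = -((q.1 - p.1) * (s.2 - r.2) - (q.2 - p.2) * (s.1 - r.1)) by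
      rw [hc₁', hc₂']; ring, abs_neg]
  rw [hkey]
  have hT1 : ENNReal.ofReal (|c₁| / 2) ≤ volume (convexHull ℝ ({r, s, p} : Set (ℝ×ℝ))) :=
    triangle_vol r s p
  have hT2 : ENNReal.ofReal (|c₂| / 2) ≤ volume (convexHull ℝ ({r, s, q} : Set (ℝ×ℝ))) :=
    triangle_vol r s q
  have hsub1 : convexHull ℝ ({r, s, p} : Set (ℝ×ℝ)) ⊆ convexHull ℝ V := by
    apply convexHull_mono; intro z hz
    rcases hz with h | h | h <;> simp_all
  have hsub2 : convexHull ℝ ({r, s, q} : Set (ℝ×ℝ)) ⊆ convexHull ℝ V := by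
    apply convexHull_mono; intro z hz
    rcases hz with h | h | h <;> simp_all
  rcases le_or_gt 0 (c₁ * c₂) with hcc | hcc
  · rcases abs_sub_le_of_same_sign c₁ c₂ hcc with hle | hle
    · exact le_trans (ENNReal.ofReal_le_ofReal (by linarith)) (le_trans hT1 (measure_mono hsub1))
    · exact le_trans (ENNReal.ofReal_le_ofReal (by linarith)) (le_trans hT2 (measure_mono hsub2))
  · -- opposite signs; wlog c₁ < 0 < c₂ or c₂ < 0 < c₁
    have hf : IsLinearMap ℝ (fun z : ℝ × ℝ => (s.1 - r.1) * z.2 - (s.2 - r.2) * z.1) := by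
      constructor
      · intro u v; simp; ring
      · intro a u; simp; ring
    have hAB : ¬(s.1 - r.1 = 0 ∧ s.2 - r.2 = 0) := by
      rintro ⟨ha0, hb0⟩
      rw [hc₁', hc₂', ha0, hb0] at hcc
      simp at hcc
    have hnull : volume {z : ℝ × ℝ | (s.1 - r.1) * z.2 - (s.2 - r.2) * z.1
        = (s.1 - r.1) * r.2 - (s.2 - r.2) * r.1} = 0 := line_null _ _ _ hAB
    -- halfplane containments depending on signs
    have hfr_s : (s.1 - r.1) * s.2 - (s.2 - r.2) * s.1 = (s.1 - r.1) * r.2 - (s.2 - r.2) * r.1 := by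
      ring
    have hmain : ∀ (c₁' c₂' : ℝ) (p' q' : ℝ × ℝ), c₁' < 0 → 0 < c₂' →
        c₁' = (s.1 - r.1) * (p'.2 - r.2) - (s.2 - r.2) * (p'.1 - r.1) →
        c₂' = (s.1 - r.1) * (q'.2 - r.2) - (s.2 - r.2) * (q'.1 - r.1) →
        p' ∈ V → q' ∈ V →
        ENNReal.ofReal ((|c₁'| + |c₂'|) / 2) ≤ volume (convexHull ℝ V) := by
      intro c₁' c₂' p' q' h1 h2 e1 e2 hp' hq'
      set T₁ := convexHull ℝ ({r, s, p'} : Set (ℝ×ℝ)) with hT₁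
      set T₂ := convexHull ℝ ({r, s, q'} : Set (ℝ×ℝ)) with hT₂
      have hhalf1 : T₁ ⊆ {z | (s.1 - r.1) * z.2 - (s.2 - r.2) * z.1
          ≤ (s.1 - r.1) * r.2 - (s.2 - r.2) * r.1} := by
        apply convexHull_min _ (convex_halfSpace_le hf _)
        refine Set.insert_subset_iff.2 ⟨le_refl ((s.1 - r.1) * r.2 - (s.2 - r.2) * r.1), Set.insert_subset_iff.2
          ⟨le_of_eq hfr_s, Set.singleton_subset_iff.2 ?_⟩⟩
        show (s.1 - r.1) * p'.2 - (s.2 - r.2) * p'.1 ≤ _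
        nlinarith [e1, h1]
      have hhalf2 : T₂ ⊆ {z | (s.1 - r.1) * r.2 - (s.2 - r.2) * r.1
          ≤ (s.1 - r.1) * z.2 - (s.2 - r.2) * z.1} := by
        apply convexHull_min _ (convex_halfSpace_ge hf _)
        refine Set.insert_subset_iff.2 ⟨le_refl ((s.1 - r.1) * r.2 - (s.2 - r.2) * r.1), Set.insert_subset_iff.2
          ⟨le_of_eq hfr_s.symm, Set.singleton_subset_iff.2 ?_⟩⟩
        show (s.1 - r.1) * r.2 - (s.2 - r.2) * r.1 ≤ (s.1 - r.1) * q'.2 - (s.2 - r.2) * q'.1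
        nlinarith [e2, h2]
      have hinter : volume (T₁ ∩ T₂) = 0 := by
        apply measure_mono_null _ hnull
        intro z hz
        have h1' := hhalf1 hz.1
        have h2' := hhalf2 hz.2
        simp only [Set.mem_setOf_eq] at h1' h2' ⊢
        linarith
      have hunion : volume T₁ + volume T₂ = volume (T₁ ∪ T₂) := by
        have := measure_union_add_inter₀ (μ := volume) T₁
          ((measurable_hull_finite (Set.toFinite ({r, s, q'} : Set (ℝ×ℝ)))).nullMeasurableSet (μ := volume))
        rw [← hT₂, hinter] at this
        simpa using this.symm
      have hsub : T₁ ∪ T₂ ⊆ convexHull ℝ V := by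
        apply Set.union_subset <;> apply convexHull_mono <;> intro z hz <;>
          rcases hz with h | h | h <;> simp_all
      calc ENNReal.ofReal ((|c₁'| + |c₂'|) / 2)
          = ENNReal.ofReal (|c₁'| / 2) + ENNReal.ofReal (|c₂'| / 2) := by
            rw [← ENNReal.ofReal_add (by positivity) (by positivity)]
            ring_nf
        _ ≤ volume T₁ + volume T₂ := by
            apply add_le_add
            · have := triangle_vol r s p'; rw [← e1] at this; exact this
            · have := triangle_vol r s q'; rw [← e2] at this; exact this
        _ = volume (T₁ ∪ T₂) := hunion
        _ ≤ volume (convexHull ℝ V) := measure_mono hsub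
    rcases lt_or_gt_of_ne (fun h0 => by rw [h0] at hcc; simp at hcc : c₁ ≠ 0) with h1 | h1
    · have h2 : 0 < c₂ := by nlinarith
      have habs : |c₂ - c₁| = |c₁| + |c₂| := by
        rw [abs_of_nonneg (by linarith), abs_of_neg h1, abs_of_pos h2]; ring
      rw [habs]
      exact hmain c₁ c₂ p q h1 h2 hc₁' hc₂' hp hq
    · have h2 : c₂ < 0 := by nlinarith
      have habs : |c₂ - c₁| = |c₂| + |c₁| := by
        rw [abs_of_nonpos (by linarith), abs_of_neg h2, abs_of_pos h1]; ring
      rw [habs]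
      exact hmain c₂ c₁ q p h2 h1 hc₂' hc₁' hq hp


lemma core_alg (k t Dx Dy Gx Gy : ℤ) (hk : 0 < k)
    (ht0 : 0 ≤ t) (ht1 : t ≤ 2*k)
    (hDx : 2*k ≤ Dx) (hDy1 : -(2*k) ≤ Dy) (hDy2 : Dy ≤ 2*k)
    (hG : 2*k ≤ Gx - Gy) (hGy1 : -(2*k) ≤ Gy) (hGy2 : Gy ≤ 2*k) :
    3*k^2 ≤ |t*Dy - 2*k*Dx| ∨ 3*k^2 ≤ |t*Gy - 2*k*Gx| ∨ 3*k^2 ≤ |Dx*Gy - Dy*Gx| := by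
  rcases le_or_gt (t*Dy) (k^2) with h1 | h1
  · left
    refine le_abs.2 (Or.inr ?_)
    nlinarith
  rcases le_or_gt ((2*k-t)*(-Gy)) (k^2) with h2 | h2
  · right; left
    refine le_abs.2 (Or.inr ?_)
    nlinarith
  · right; right
    refine le_abs.2 (Or.inr ?_)
    have ht : 0 < t := by nlinarith
    have hp : 0 < Dy := by nlinarith
    have hq : 0 < -Gy := by nlinarith
    have h2kt : 0 < 2*k - t := by nlinarith
    have hbeta : 0 < 2*k*t - k^2 := by nlinarith
    have hAa : 0 ≤ (t*Dy - k^2) * ((2*k-t)*(2*k+Gy)) :=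
      mul_nonneg (by nlinarith) (mul_nonneg (by linarith) (by linarith))
    have hBb : 0 ≤ ((2*k-t)*(-Gy) - k^2) * (2*k*t - k^2) :=
      mul_nonneg (by nlinarith) (by linarith)
    -- identity-based bound: t(2k-t) * (2k(Dy+(-Gy)) - Dy*(-Gy)) ≥ 3k⁴ ≥ 3k² t(2k-t)
    have hg : 3*k^2 ≤ 2*k*(Dy + (-Gy)) - Dy*(-Gy) := by
      have hpos : 0 < t*(2*k-t) := mul_pos ht h2kt
      have hident : t*(2*k-t)*(2*k*(Dy + (-Gy)) - Dy*(-Gy))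
          = 3*k^4 + (t*Dy - k^2)*((3*k^2-2*k*t) - ((2*k-t)*(-Gy) - k^2))
            + ((2*k-t)*(-Gy) - k^2)*(2*k*t - k^2) := by ring
      have halpha : (t*Dy - k^2)*((3*k^2-2*k*t) - ((2*k-t)*(-Gy) - k^2))
          = (t*Dy - k^2) * ((2*k-t)*(2*k+Gy)) := by ring
      have hts : t*(2*k-t) ≤ k^2 := by nlinarith [sq_nonneg (k - t)]
      nlinarith [hident, halpha, hAa, hBb, mul_le_mul_of_nonneg_left hts (by positivity : (0:ℤ) ≤ 3*k^2)]
    nlinarith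

lemma area_final (S : Finset (ℤ × ℤ)) (k : ℕ) (P Q R T : ℤ × ℤ)
    (hP : P ∈ S) (hQ : Q ∈ S) (hR : R ∈ S) (hT : T ∈ S)
    (hc : (3*(k:ℤ)^2) ≤ |(Q.1 - P.1) * (T.2 - R.2) - (Q.2 - P.2) * (T.1 - R.1)|) :
    (3 / 2 : ℝ) * (k : ℝ) ^ 2 ≤ areaOf S := by
  set c : ℤ := (Q.1 - P.1) * (T.2 - R.2) - (Q.2 - P.2) * (T.1 - R.1) with hcd
  have hmem : ∀ {Z : ℤ × ℤ}, Z ∈ S → toR Z ∈ toR '' (S : Set (ℤ × ℤ)) :=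
    fun hZ => Set.mem_image_of_mem _ hZ
  have h1 := hull_ge_cross (toR '' (S : Set (ℤ × ℤ))) (toR P) (toR Q) (toR R) (toR T)
    (hmem hP) (hmem hQ) (hmem hR) (hmem hT)
  have hcast : ((toR Q).1 - (toR P).1) * ((toR T).2 - (toR R).2)
      - ((toR Q).2 - (toR P).2) * ((toR T).1 - (toR R).1) = (c : ℝ) := by
    simp only [toR, hcd]
    push_cast
    ring
  rw [hcast] at h1
  have hfin : volume (convexHull ℝ (toR '' (S : Set (ℤ × ℤ)))) < ⊤ := by
    apply IsCompact.measure_lt_top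
    exact Set.Finite.isCompact_convexHull ℝ ((S.finite_toSet).image _)
  have h2 := ENNReal.toReal_mono (ne_of_lt hfin) h1
  rw [ENNReal.toReal_ofReal (by positivity)] at h2
  have hcr : (3*(k:ℝ)^2) ≤ |(c:ℝ)| := by
    exact_mod_cast hc
  rw [areaOf]
  have : |(c:ℝ)| / 2 ≤ (volume (convexHull ℝ (toR '' (S : Set (ℤ × ℤ))))).toReal := h2
  linarith

theorem area_ge_of_even_width (S : Finset (ℤ × ℤ)) (h : S.Nonempty) (k : ℕ)
    (hmin : ∀ u : ℤ × ℤ, u ≠ 0 → (2 * k : ℤ) ≤ widthZ u S h)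
    (hatt : ∃ u : ℤ × ℤ, u ≠ 0 ∧ widthZ u S h = (2 * k : ℤ)) :
    (3 / 2 : ℝ) * (k : ℝ) ^ 2 ≤ areaOf S := by
  rcases Nat.eq_zero_or_pos k with hk0 | hkpos
  · subst hk0
    have h0 : (3 / 2 : ℝ) * ((0:ℕ) : ℝ) ^ 2 = 0 := by norm_num
    rw [h0, areaOf]
    exact ENNReal.toReal_nonneg
  obtain ⟨u, hu0, huw⟩ := hatt
  have hkz : (0:ℤ) < (k:ℤ) := by exact_mod_cast hkpos
  -- extremal points for a direction
  have extremal : ∀ v : ℤ × ℤ, ∃ lo ∈ S, ∃ hi ∈ S,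
      (∀ p ∈ S, zdot v lo ≤ zdot v p ∧ zdot v p ≤ zdot v hi) ∧
      zdot v hi - zdot v lo = widthZ v S h := by
    intro v
    obtain ⟨hi, hhi, hsup⟩ := Finset.exists_mem_eq_sup' h (zdot v)
    obtain ⟨lo, hlo, hinf⟩ := Finset.exists_mem_eq_inf' h (zdot v)
    exact ⟨lo, hlo, hi, hhi,
      fun p hp => ⟨hinf ▸ Finset.inf'_le _ hp, hsup ▸ Finset.le_sup' _ hp⟩,
      by rw [widthZ, ← hsup, ← hinf]⟩
  -- u is primitive
  have hgcd : Int.gcd u.1 u.2 = 1 := by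
    set g : ℕ := Int.gcd u.1 u.2 with hg
    have hgne : g ≠ 0 := by
      rw [hg, Ne, Int.gcd_eq_zero_iff]
      intro ⟨h1, h2⟩
      exact hu0 (Prod.ext h1 h2)
    set u₀ : ℤ × ℤ := (u.1 / (g:ℤ), u.2 / (g:ℤ)) with hu₀
    have hdvd1 : ((g:ℤ)) ∣ u.1 := Int.gcd_dvd_left _ _
    have hdvd2 : ((g:ℤ)) ∣ u.2 := Int.gcd_dvd_right _ _
    have he1 : u.1 = (g:ℤ) * u₀.1 := (Int.mul_ediv_cancel' hdvd1).symm
    have he2 : u.2 = (g:ℤ) * u₀.2 := (Int.mul_ediv_cancel' hdvd2).symm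
    have hgpos : (0:ℤ) < g := by exact_mod_cast Nat.pos_of_ne_zero hgne
    have hu₀0 : u₀ ≠ 0 := by
      intro h0
      apply hu0
      have h01 : u₀.1 = 0 := by rw [h0]; rfl
      have h02 : u₀.2 = 0 := by rw [h0]; rfl
      exact Prod.ext (by rw [he1, h01, mul_zero]; simp) (by rw [he2, h02, mul_zero]; simp)
    have hzd : ∀ p, zdot u p = (g:ℤ) * zdot u₀ p := by
      intro p
      rw [zdot, zdot, he1, he2]; ring
    obtain ⟨lo, hlo, hi, hhi, hb, hw⟩ := extremal u₀
    have h1 : widthZ u S h ≥ zdot u hi - zdot u lo := by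
      rw [widthZ]
      have := Finset.le_sup' (zdot u) hhi
      have := Finset.inf'_le (zdot u) hlo
      omega
    rw [hzd, hzd, huw] at h1
    have h2 : (g:ℤ) * (zdot u₀ hi - zdot u₀ lo) ≥ (g:ℤ) * (2*k) := by
      have := hmin u₀ hu₀0
      rw [← hw] at this
      nlinarith
    have hgle : (g:ℤ) * (2*k) ≤ 2*k := by
      rw [mul_sub] at h2
      linarith
    have : (g:ℤ) ≤ 1 := by nlinarith
    omega
  -- Bezout
  have hcop : IsCoprime u.1 u.2 := Int.isCoprime_iff_gcd_eq_one.2 hgcd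
  obtain ⟨α, β, hab⟩ := hcop
  -- a, b extremal for u
  obtain ⟨a, ha, b, hbS, haball, habw⟩ := extremal u
  rw [huw] at habw
  set t₀ : ℤ := zdot (β, -α) b - zdot (β, -α) a with ht₀
  set m : ℤ := t₀ / (2*k) with hm
  set u'' : ℤ × ℤ := (β - m*u.1, -α - m*u.2) with hu''
  have hdet : u''.1 * u.2 - u''.2 * u.1 = 1 := by
    rw [hu'']
    simp only
    linear_combination hab
  have hu''ne : u'' ≠ 0 := by
    intro h0
    rw [h0] at hdet
    simp at hdet
  set w : ℤ × ℤ := (u''.1 - u.1, u''.2 - u.2) with hw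
  have hdetw : w.1 * u.2 - w.2 * u.1 = 1 := by
    rw [hw]
    dsimp only
    linear_combination hdet
  have hwne : w ≠ 0 := by
    intro h0
    rw [h0] at hdetw
    simp at hdetw
  -- t value
  have ht : zdot u'' b - zdot u'' a = t₀ - m * (2*k) := by
    rw [hu'', zdot, zdot, ht₀, zdot, zdot]
    simp only
    have : u.1 * b.1 + u.2 * b.2 - (u.1 * a.1 + u.2 * a.2) = 2*k := by
      rw [← habw, zdot, zdot]
    linear_combination (-m) * this
  set t : ℤ := zdot u'' b - zdot u'' a with htdef
  have ht0 : 0 ≤ t := by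
    rw [ht, hm]
    have := Int.emod_nonneg t₀ (by positivity : (2*(k:ℤ)) ≠ 0)
    rw [Int.emod_def] at this
    linarith
  have ht1 : t ≤ 2*k := by
    rw [ht, hm]
    have := Int.emod_lt_of_pos t₀ (by positivity : (0:ℤ) < 2*(k:ℤ))
    rw [Int.emod_def] at this
    linarith
  -- l r for u''
  obtain ⟨l, hl, r, hr, hlrall, hlrw⟩ := extremal u''
  have hDx : 2*(k:ℤ) ≤ zdot u'' r - zdot u'' l := by rw [hlrw]; exact hmin u'' hu''ne
  -- e f for w
  obtain ⟨e, heS, f, hf, hefall, hefw⟩ := extremal w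
  have hGG : 2*(k:ℤ) ≤ (zdot u'' f - zdot u'' e) - (zdot u f - zdot u e) := by
    have h1 : zdot w f - zdot w e = (zdot u'' f - zdot u'' e) - (zdot u f - zdot u e) := by
      rw [hw, zdot, zdot, zdot, zdot, zdot, zdot]
      simp only
      ring
    rw [← h1, hefw]
    exact hmin w hwne
  -- Y bounds
  have hYb : ∀ p ∈ S, ∀ q ∈ S, -(2*(k:ℤ)) ≤ zdot u p - zdot u q ∧ zdot u p - zdot u q ≤ 2*k := by
    intro p hp q hq
    obtain ⟨h1, h2⟩ := haball p hp
    obtain ⟨h3, h4⟩ := haball q hq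
    constructor <;> omega
  -- cross identity
  have crossid : ∀ P Q R T : ℤ × ℤ,
      (Q.1 - P.1) * (T.2 - R.2) - (Q.2 - P.2) * (T.1 - R.1)
      = (zdot u'' Q - zdot u'' P) * (zdot u T - zdot u R)
        - (zdot u Q - zdot u P) * (zdot u'' T - zdot u'' R) := by
    intro P Q R T
    simp only [zdot]
    linear_combination (-((Q.1 - P.1) * (T.2 - R.2)) + (Q.2 - P.2) * (T.1 - R.1)) * hdet
  -- apply core_alg
  have hY2k : zdot u b - zdot u a = 2*(k:ℤ) := habw
  have halg := core_alg k t (zdot u'' r - zdot u'' l) (zdot u r - zdot u l)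
    (zdot u'' f - zdot u'' e) (zdot u f - zdot u e) hkz ht0 ht1 hDx
    (hYb r hr l hl).1 (hYb r hr l hl).2 (by omega) (hYb f hf e heS).1 (hYb f hf e heS).2
  rcases halg with hcase | hcase | hcase
  · refine area_final S k a b l r ha hbS hl hr ?_
    rw [crossid a b l r, hY2k]
    calc (3*(k:ℤ)^2) ≤ |t * (zdot u r - zdot u l) - 2*k*(zdot u'' r - zdot u'' l)| := hcase
      _ = _ := by rw [htdef]
  · refine area_final S k a b e f ha hbS heS hf ?_
    rw [crossid a b e f, hY2k]
    calc (3*(k:ℤ)^2) ≤ |t * (zdot u f - zdot u e) - 2*k*(zdot u'' f - zdot u'' e)| := hcase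
      _ = _ := by rw [htdef]
  · refine area_final S k l r e f hl hr heS hf ?_
    rw [crossid l r e f]
    calc (3*(k:ℤ)^2) ≤ |(zdot u'' r - zdot u'' l) * (zdot u f - zdot u e)
        - (zdot u r - zdot u l) * (zdot u'' f - zdot u'' e)| := hcase
      _ = _ := rfl
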